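/- arXiv:1809.08690 — 2 statements merged into one kernel-verified Lean document; each statement's English description precedes it below -/
import Mathlib

section
/- Let α, β, γ be positive irrational numbers with α + β + γ = 1 such that rα + sβ = 1 for some positive integers r, s. If moreover max(α, β) < 1/2, then, with B̃_γ = ℕ \ (B_α ∪ B_β) enumerated increasingly as (c̃(n)), one has c(n) - c̃(n) ∈ {0, 1, 2} for all n, where c(n) = ⌊n/γ⌋. -/
open scoped Classical
set_option maxHeartbeats 1000000

def beatty (α : ℝ) : Set ℤ := {m | ∃ n : ℕ, 0 < n ∧ m = ⌊(n : ℝ) / α⌋}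

noncomputable def countLe (S : Set ℤ) (m : ℤ) : ℕ :=
  ((Finset.Icc 1 m).filter (fun k => k ∈ S)).card

lemma fract_pos_of_irr {x : ℝ} (h : Irrational x) : 0 < Int.fract x := by
  rw [Int.fract_pos]; exact fun he => h.ne_int ⌊x⌋ he

lemma floor_div_lt_floor_div {θ : ℝ} (hθ : 0 < θ) (hθ1 : θ < 1) {a b : ℤ} (h : a < b) :
    ⌊(a:ℝ)/θ⌋ < ⌊(b:ℝ)/θ⌋ := by
  have hF : (⌊(a:ℝ)/θ⌋ : ℝ) * θ ≤ (a:ℝ) := by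
    have := Int.floor_le ((a:ℝ)/θ)
    calc (⌊(a:ℝ)/θ⌋ : ℝ) * θ ≤ ((a:ℝ)/θ) * θ := by nlinarith
    _ = a := by field_simp
  have hab : (a:ℝ) + 1 ≤ (b:ℝ) := by exact_mod_cast h
  have : ((⌊(a:ℝ)/θ⌋ : ℝ) + 1) ≤ (b:ℝ)/θ := by
    rw [le_div_iff₀ hθ]; nlinarith
  have : (⌊(a:ℝ)/θ⌋ : ℤ) + 1 ≤ ⌊(b:ℝ)/θ⌋ := Int.le_floor.2 (by push_cast; linarith)
  omega

/-- upper bound on beatty count -/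
lemma beatty_count_le (θ : ℝ) (hθ : 0 < θ) {m : ℤ} (hm : (1:ℤ) ≤ m) :
    (((Finset.Icc 1 m).filter (fun k => k ∈ beatty θ)).card : ℤ) ≤ ⌊((m:ℝ) + 1) * θ⌋ := by
  set K : ℤ := ⌊((m:ℝ) + 1) * θ⌋ with hK
  have hK0 : 0 ≤ K := by
    apply Int.floor_nonneg.2
    have : (0:ℝ) ≤ (m:ℝ) + 1 := by exact_mod_cast by omega
    positivity
  have hsub : (Finset.Icc 1 m).filter (fun k => k ∈ beatty θ) ⊆
      (Finset.Icc (1:ℤ) K).image (fun j : ℤ => ⌊(j:ℝ) / θ⌋) := by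
    intro x hx
    simp only [Finset.mem_filter, Finset.mem_Icc] at hx
    obtain ⟨⟨hx1, hxm⟩, nn, hnn, hxe⟩ := hx
    refine Finset.mem_image.2 ⟨(nn : ℤ), Finset.mem_Icc.2 ⟨by exact_mod_cast hnn, ?_⟩, ?_⟩
    · rw [hK]
      apply Int.le_floor.2
      push_cast
      have h1 : (nn : ℝ) / θ < (x : ℝ) + 1 := by
        rw [hxe]; push_cast; exact Int.lt_floor_add_one _
      have h2 : (x : ℝ) + 1 ≤ (m : ℝ) + 1 := by exact_mod_cast add_le_add_left hxm 1
      nlinarith [(div_lt_iff₀ hθ).1 h1]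
    · push_cast; exact hxe.symm
  calc (((Finset.Icc 1 m).filter (fun k => k ∈ beatty θ)).card : ℤ)
      ≤ (((Finset.Icc (1:ℤ) K).image (fun j : ℤ => ⌊(j:ℝ) / θ⌋)).card : ℤ) := by
        exact_mod_cast Finset.card_le_card hsub
    _ ≤ ((Finset.Icc (1:ℤ) K).card : ℤ) := by exact_mod_cast Finset.card_image_le
    _ = K := by rw [Int.card_Icc]; omega

/-- lower bound on beatty count -/
lemma beatty_count_ge (θ : ℝ) (hθ : 0 < θ) (hθ1 : θ < 1) (hirr : Irrational θ)
    {m : ℤ} (hm : (1:ℤ) ≤ m) :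
    ⌊((m:ℝ) + 1) * θ⌋ ≤ (((Finset.Icc 1 m).filter (fun k => k ∈ beatty θ)).card : ℤ) := by
  set K : ℤ := ⌊((m:ℝ) + 1) * θ⌋ with hK
  have hK0 : 0 ≤ K := by
    apply Int.floor_nonneg.2
    have : (0:ℝ) ≤ (m:ℝ) + 1 := by exact_mod_cast by omega
    positivity
  have hinj : Set.InjOn (fun j : ℤ => ⌊(j:ℝ) / θ⌋) (Finset.Icc (1:ℤ) K) := by
    intro a _ b _ hab
    by_contra hne
    rcases lt_or_gt_of_ne hne with h | h
    · exact absurd hab (ne_of_lt (floor_div_lt_floor_div hθ hθ1 h))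
    · exact absurd hab.symm (ne_of_lt (floor_div_lt_floor_div hθ hθ1 h))
  have hsub : (Finset.Icc (1:ℤ) K).image (fun j : ℤ => ⌊(j:ℝ) / θ⌋) ⊆
      (Finset.Icc 1 m).filter (fun k => k ∈ beatty θ) := by
    intro x hx
    obtain ⟨j, hj, hje⟩ := Finset.mem_image.1 hx
    rw [Finset.mem_Icc] at hj
    obtain ⟨hj1, hjK⟩ := hj
    have hjθ : (j:ℝ) < ((m:ℝ) + 1) * θ := by
      have h1 : (j:ℝ) ≤ ((m:ℝ) + 1) * θ := by
        calc (j:ℝ) ≤ (K:ℝ) := by exact_mod_cast hjK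
        _ ≤ ((m:ℝ) + 1) * θ := Int.floor_le _
      rcases lt_or_eq_of_le h1 with h | h
      · exact h
      · exfalso
        have hm1 : (m:ℤ) + 1 ≠ 0 := by omega
        exact (hirr.intCast_mul hm1).ne_int j (by push_cast; push_cast at h; linarith)
    refine Finset.mem_filter.2 ⟨Finset.mem_Icc.2 ⟨?_, ?_⟩, ?_⟩
    · rw [← hje]
      apply Int.le_floor.2
      push_cast
      rw [le_div_iff₀ hθ]
      have : (1:ℝ) ≤ (j:ℝ) := by exact_mod_cast hj1
      nlinarith
    · rw [← hje]
      have : ⌊(j:ℝ)/θ⌋ < m + 1 := by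
        apply Int.floor_lt.2
        push_cast
        rw [div_lt_iff₀ hθ]
        linarith
      omega
    · rw [← hje]
      refine ⟨j.toNat, by omega, ?_⟩
      rw [show ((j.toNat:ℕ):ℝ) = (j:ℝ) from by exact_mod_cast Int.toNat_of_nonneg (by omega : (0:ℤ) ≤ j)]
  calc K = ((Finset.Icc (1:ℤ) K).card : ℤ) := by rw [Int.card_Icc]; omega
    _ = (((Finset.Icc (1:ℤ) K).image (fun j : ℤ => ⌊(j:ℝ) / θ⌋)).card : ℤ) := by
        rw [Finset.card_image_of_injOn hinj]
    _ ≤ _ := by exact_mod_cast Finset.card_le_card hsub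

lemma beatty_disj {α β : ℝ} (hirra : Irrational α)
    (ha : 0 < α) (hb : 0 < β) {r s : ℕ} (hr : 0 < r) (hs : 0 < s)
    (hrs : (r:ℝ)*α + (s:ℝ)*β = 1) {x : ℤ} (hx : 1 ≤ x)
    (hxa : x ∈ beatty α) (hxb : x ∈ beatty β) : False := by
  obtain ⟨p, hp, hpe⟩ := hxa
  obtain ⟨q, hq, hqe⟩ := hxb
  have hxne : x ≠ 0 := by omega
  have hirrxa : Irrational ((x:ℝ)*α) := hirra.intCast_mul hxne
  have hp1 : (x:ℝ) * α < p := by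
    have h1 : (x:ℝ) ≤ (p:ℝ)/α := by rw [hpe]; exact Int.floor_le _
    have h2 : (x:ℝ)*α ≤ p := by rw [← le_div_iff₀ ha]; exact h1
    exact lt_of_le_of_ne h2 (fun he => (hirrxa.ne_int (p:ℤ)) (by exact_mod_cast he))
  have hp2 : (p:ℝ) < ((x:ℝ)+1) * α := by
    have h1 : (p:ℝ)/α < (x:ℝ) + 1 := by
      rw [hpe]; push_cast; exact Int.lt_floor_add_one _
    calc (p:ℝ) = ((p:ℝ)/α) * α := by field_simp
    _ < ((x:ℝ)+1) * α := by exact mul_lt_mul_of_pos_right h1 ha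
  have hq1 : (x:ℝ) * β ≤ q := by
    have h1 : (x:ℝ) ≤ (q:ℝ)/β := by rw [hqe]; exact Int.floor_le _
    rw [← le_div_iff₀ hb]; exact h1
  have hq2 : (q:ℝ) < ((x:ℝ)+1) * β := by
    have h1 : (q:ℝ)/β < (x:ℝ) + 1 := by
      rw [hqe]; push_cast; exact Int.lt_floor_add_one _
    calc (q:ℝ) = ((q:ℝ)/β) * β := by field_simp
    _ < ((x:ℝ)+1) * β := by exact mul_lt_mul_of_pos_right h1 hb
  obtain ⟨z, hzdef⟩ : ∃ z : ℤ, z = (r:ℤ)*p + (s:ℤ)*q - x := ⟨_, rfl⟩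
  have hzr : (z:ℝ) = (r:ℝ)*((p:ℝ) - x*α) + (s:ℝ)*((q:ℝ) - x*β) := by
    rw [hzdef]; push_cast; linear_combination (x:ℝ)*hrs
  have hr0 : (0:ℝ) < r := by exact_mod_cast hr
  have hs0 : (0:ℝ) < s := by exact_mod_cast hs
  have hz0 : (0:ℝ) < (z:ℝ) := by rw [hzr]; nlinarith
  have hz1 : (z:ℝ) < 1 := by rw [hzr, ← hrs]; nlinarith
  have h0 : (0:ℤ) < z := by exact_mod_cast hz0
  have h1 : z < 1 := by exact_mod_cast hz1
  omega

lemma keyK {α β γ : ℝ} (hirra : Irrational α) (hirrb : Irrational β)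
    (ha : 0 < α) (hb : 0 < β) (hc : 0 < γ) (hsum : α + β + γ = 1)
    {r s : ℕ} (hr : 0 < r) (hs : 0 < s) (hrs : (r:ℝ)*α + (s:ℝ)*β = 1)
    (ha2 : α < 1/2) (hb2 : β < 1/2) {k : ℤ} (hk : 1 ≤ k) :
    Int.fract ((k:ℝ)*α) + Int.fract ((k:ℝ)*β) < 1 + 2*γ := by
  have hkne : k ≠ 0 := by omega
  have hu0 : 0 < Int.fract ((k:ℝ)*α) := fract_pos_of_irr (hirra.intCast_mul hkne)
  have hv0 : 0 < Int.fract ((k:ℝ)*β) := fract_pos_of_irr (hirrb.intCast_mul hkne)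
  have hu1 : Int.fract ((k:ℝ)*α) < 1 := Int.fract_lt_one _
  have hv1 : Int.fract ((k:ℝ)*β) < 1 := Int.fract_lt_one _
  set u := Int.fract ((k:ℝ)*α) with hu
  set v := Int.fract ((k:ℝ)*β) with hv
  obtain ⟨J, hJdef⟩ : ∃ J : ℤ, J = k - (r:ℤ)*⌊(k:ℝ)*α⌋ - (s:ℤ)*⌊(k:ℝ)*β⌋ := ⟨_, rfl⟩
  have hJ : (J:ℝ) = (r:ℝ)*u + (s:ℝ)*v := by
    rw [hJdef, hu, hv]
    simp only [Int.fract]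
    push_cast
    linear_combination (-(k:ℝ))*hrs
  have hr0 : (0:ℝ) < r := by exact_mod_cast hr
  have hs0 : (0:ℝ) < s := by exact_mod_cast hs
  have hr1 : (1:ℝ) ≤ r := by exact_mod_cast hr
  have hs1 : (1:ℝ) ≤ s := by exact_mod_cast hs
  have hJ0 : (0:ℝ) < J := by rw [hJ]; nlinarith
  have hJub : (J:ℝ) < (r:ℝ) + s := by rw [hJ]; nlinarith
  have hJle : (J:ℝ) ≤ (r:ℝ) + s - 1 := by
    have h1 : J < (r:ℤ) + s := by exact_mod_cast hJub
    have h2 : J ≤ (r:ℤ) + s - 1 := by omega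
    exact_mod_cast h2
  obtain ⟨m, hm⟩ : ∃ m : ℕ, m = max r s := ⟨_, rfl⟩
  have hmr : (r:ℝ) ≤ m := by exact_mod_cast hm ▸ Nat.le_max_left r s
  have hms : (s:ℝ) ≤ m := by exact_mod_cast hm ▸ Nat.le_max_right r s
  have hm0 : (0:ℝ) < m := lt_of_lt_of_le hr0 hmr
  have key1 : (m:ℝ)*(u+v) ≤ 2*(m:ℝ) - 1 := by
    have e1 : (m:ℝ)*(u+v) = ((r:ℝ)*u + (s:ℝ)*v) + ((m:ℝ)-r)*u + ((m:ℝ)-s)*v := by ring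
    have e2 : ((m:ℝ)-r)*u ≤ (m:ℝ)-r := by nlinarith
    have e3 : ((m:ℝ)-s)*v ≤ (m:ℝ)-s := by nlinarith
    rw [e1, ← hJ]; linarith
  have key2 : (m:ℝ) - 1 < 2*(m:ℝ)*γ := by
    rcases eq_or_ne r s with hrr | hrr
    · -- r = s
      subst hrr
      have hmrr : m = r := by simp [hm]
      have hmrr' : (m:ℝ) = r := by exact_mod_cast hmrr
      have hab : (r:ℝ)*(1-γ) = 1 := by linear_combination hrs - (r:ℝ)*hsum
      have hrne1 : r ≠ 1 := by
        rintro rfl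
        simp at hab
        linarith
      have hr2 : (2:ℝ) ≤ r := by exact_mod_cast (by omega : 2 ≤ r)
      have hgam : (r:ℝ)*γ = (r:ℝ) - 1 := by linear_combination -hab
      rw [hmrr']
      linarith
    · rcases Nat.lt_or_ge r s with hlt | hge
      · have hmeq : (m:ℝ) = s := by exact_mod_cast hm ▸ Nat.max_eq_right (le_of_lt hlt)
        have h1 : (r:ℝ) + 1 ≤ s := by exact_mod_cast hlt
        have h2 : 2*(s:ℝ)*γ = 2*(s:ℝ) - 2 - 2*((s:ℝ)-r)*α := by
          linear_combination -2*hrs + 2*(s:ℝ)*hsum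
        have h3 : 2*((s:ℝ)-r)*α < (s:ℝ)-r := by nlinarith
        rw [hmeq]
        linarith
      · have hlt : s < r := by omega
        have hmeq : (m:ℝ) = r := by exact_mod_cast hm ▸ Nat.max_eq_left (le_of_lt hlt)
        have h1 : (s:ℝ) + 1 ≤ r := by exact_mod_cast hlt
        have h2 : 2*(r:ℝ)*γ = 2*(r:ℝ) - 2 - 2*((r:ℝ)-s)*β := by
          linear_combination -2*hrs + 2*(r:ℝ)*hsum
        have h3 : 2*((r:ℝ)-s)*β < (r:ℝ)-s := by nlinarith
        rw [hmeq]
        linarith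
  have hfin : (m:ℝ)*(u+v) < (m:ℝ)*(1+2*γ) := by
    have e : (m:ℝ)*(1+2*γ) = (m:ℝ) + 2*(m:ℝ)*γ := by ring
    linarith
  exact lt_of_mul_lt_mul_left hfin (le_of_lt hm0)

theorem thm1_error_special (α β γ : ℝ)
    (hirra : Irrational α) (hirrb : Irrational β) (hirrc : Irrational γ)
    (ha : 0 < α) (hb : 0 < β) (hc : 0 < γ) (hsum : α + β + γ = 1)
    (hdisj : ∃ r s : ℕ, 0 < r ∧ 0 < s ∧ (r : ℝ) * α + (s : ℝ) * β = 1)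
    (hmax : max α β < 1 / 2)
    (Btγ : Set ℤ) (hBtγ : Btγ = {m : ℤ | 0 < m ∧ m ∉ beatty α ∧ m ∉ beatty β})
    (ct : ℕ → ℤ)
    (hmono : ∀ n m : ℕ, 0 < n → n < m → ct n < ct m)
    (hmem : ∀ n : ℕ, 0 < n → ct n ∈ Btγ)
    (hsurj : ∀ x ∈ Btγ, ∃ n : ℕ, 0 < n ∧ ct n = x) :
    ∀ n : ℕ, 0 < n → ⌊(n : ℝ) / γ⌋ - ct n ∈ ({0, 1, 2} : Set ℤ) := by
  intro n hn
  have hα2 : α < 1/2 := lt_of_le_of_lt (le_max_left α β) hmax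
  have hβ2 : β < 1/2 := lt_of_le_of_lt (le_max_right α β) hmax
  have hγ1 : γ < 1 := by linarith
  have hα1 : α < 1 := by linarith
  have hβ1 : β < 1 := by linarith
  obtain ⟨r, s, hr, hs, hrs⟩ := hdisj
  have hn1 : (1:ℝ) ≤ n := by exact_mod_cast hn
  set c : ℤ := ⌊(n:ℝ)/γ⌋ with hcdef
  have hc1 : 1 ≤ c := by
    apply Int.le_floor.2
    rw [Int.cast_one, le_div_iff₀ hc]
    nlinarith
  have hcγn : (c:ℝ)*γ ≤ n := by
    have h1 := Int.floor_le ((n:ℝ)/γ)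
    rw [← hcdef] at h1
    calc (c:ℝ)*γ ≤ ((n:ℝ)/γ)*γ := by nlinarith
    _ = n := by field_simp
  have hnc1 : (n:ℝ) < ((c:ℝ)+1)*γ := by
    have h1 := Int.lt_floor_add_one ((n:ℝ)/γ)
    rw [← hcdef] at h1
    calc (n:ℝ) = ((n:ℝ)/γ)*γ := by field_simp
    _ < ((c:ℝ)+1)*γ := by nlinarith
  -- Part A : n ≤ countLe Btγ c
  have hA : (n:ℤ) ≤ (countLe Btγ c : ℤ) := by
    have hsub : Finset.Icc (1:ℤ) c ⊆
        ((Finset.Icc (1:ℤ) c).filter (fun k => k ∈ Btγ)) ∪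
        (((Finset.Icc (1:ℤ) c).filter (fun k => k ∈ beatty α)) ∪
         ((Finset.Icc (1:ℤ) c).filter (fun k => k ∈ beatty β))) := by
      intro x hx
      by_cases hxa : x ∈ beatty α
      · exact Finset.mem_union_right _ (Finset.mem_union_left _ (Finset.mem_filter.2 ⟨hx, hxa⟩))
      by_cases hxb : x ∈ beatty β
      · exact Finset.mem_union_right _ (Finset.mem_union_right _ (Finset.mem_filter.2 ⟨hx, hxb⟩))
      apply Finset.mem_union_left
      refine Finset.mem_filter.2 ⟨hx, ?_⟩
      rw [hBtγ]
      exact ⟨by linarith [(Finset.mem_Icc.1 hx).1], hxa, hxb⟩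
    have hcard := Finset.card_le_card hsub
    have hcard2 := Finset.card_union_le
      ((Finset.Icc (1:ℤ) c).filter (fun k => k ∈ Btγ))
      (((Finset.Icc (1:ℤ) c).filter (fun k => k ∈ beatty α)) ∪
       ((Finset.Icc (1:ℤ) c).filter (fun k => k ∈ beatty β)))
    have hcard3 := Finset.card_union_le
      ((Finset.Icc (1:ℤ) c).filter (fun k => k ∈ beatty α))
      ((Finset.Icc (1:ℤ) c).filter (fun k => k ∈ beatty β))
    have hIcc : ((Finset.Icc (1:ℤ) c).card : ℤ) = c := by rw [Int.card_Icc]; omega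
    have hCA := beatty_count_le α ha hc1
    have hCB := beatty_count_le β hb hc1
    have hfl : ⌊((c:ℝ)+1)*α⌋ + ⌊((c:ℝ)+1)*β⌋ ≤ c - n := by
      have h1 : (⌊((c:ℝ)+1)*α⌋ : ℝ) ≤ ((c:ℝ)+1)*α := Int.floor_le _
      have h2 : (⌊((c:ℝ)+1)*β⌋ : ℝ) ≤ ((c:ℝ)+1)*β := Int.floor_le _
      have h3 : ((c:ℝ)+1)*α + ((c:ℝ)+1)*β = (c:ℝ)+1 - ((c:ℝ)+1)*γ := by
        linear_combination ((c:ℝ)+1)*hsum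
      have h4 : ((⌊((c:ℝ)+1)*α⌋ + ⌊((c:ℝ)+1)*β⌋ : ℤ):ℝ) < ((c - (n:ℤ) + 1 : ℤ):ℝ) := by
        push_cast
        linarith
      have h5 : (⌊((c:ℝ)+1)*α⌋ + ⌊((c:ℝ)+1)*β⌋ : ℤ) < c - (n:ℤ) + 1 := by exact_mod_cast h4
      omega
    unfold countLe
    have hcast : ((Finset.Icc (1:ℤ) c).card : ℤ) ≤
        (((Finset.Icc (1:ℤ) c).filter (fun k => k ∈ Btγ)).card : ℤ) +
        ((((Finset.Icc (1:ℤ) c).filter (fun k => k ∈ beatty α)).card : ℤ) +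
         (((Finset.Icc (1:ℤ) c).filter (fun k => k ∈ beatty β)).card : ℤ)) := by
      exact_mod_cast le_trans hcard (le_trans hcard2 (by exact_mod_cast Nat.add_le_add_left hcard3 _))
    omega
  -- Part B : countLe Btγ (c-3) < n
  have hB : (countLe Btγ (c-3) : ℤ) < n := by
    by_cases hc3 : c - 3 < 1
    · have hemp : Finset.Icc (1:ℤ) (c-3) = ∅ := Finset.Icc_eq_empty (by omega)
      unfold countLe
      rw [hemp, Finset.filter_empty, Finset.card_empty]
      exact_mod_cast hn
    · push_neg at hc3
      have hd1 : Disjoint ((Finset.Icc (1:ℤ) (c-3)).filter (fun k => k ∈ Btγ))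
          ((Finset.Icc (1:ℤ) (c-3)).filter (fun k => k ∈ beatty α)) := by
        rw [Finset.disjoint_left]
        intro a haf hag
        have h1 := (Finset.mem_filter.1 haf).2
        have h2 := (Finset.mem_filter.1 hag).2
        rw [hBtγ] at h1
        exact h1.2.1 h2
      have hd2 : Disjoint ((Finset.Icc (1:ℤ) (c-3)).filter (fun k => k ∈ Btγ))
          ((Finset.Icc (1:ℤ) (c-3)).filter (fun k => k ∈ beatty β)) := by
        rw [Finset.disjoint_left]
        intro a haf hag
        have h1 := (Finset.mem_filter.1 haf).2
        have h2 := (Finset.mem_filter.1 hag).2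
        rw [hBtγ] at h1
        exact h1.2.2 h2
      have hd3 : Disjoint ((Finset.Icc (1:ℤ) (c-3)).filter (fun k => k ∈ beatty α))
          ((Finset.Icc (1:ℤ) (c-3)).filter (fun k => k ∈ beatty β)) := by
        rw [Finset.disjoint_left]
        intro a haf hag
        have h1 := (Finset.mem_filter.1 haf).2
        have h2 := (Finset.mem_filter.1 hag).2
        have hax : 1 ≤ a := (Finset.mem_Icc.1 (Finset.mem_filter.1 haf).1).1
        exact beatty_disj hirra ha hb hr hs hrs hax h1 h2
      have hdd : Disjoint ((Finset.Icc (1:ℤ) (c-3)).filter (fun k => k ∈ Btγ))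
          (((Finset.Icc (1:ℤ) (c-3)).filter (fun k => k ∈ beatty α)) ∪
           ((Finset.Icc (1:ℤ) (c-3)).filter (fun k => k ∈ beatty β))) :=
        Finset.disjoint_union_right.2 ⟨hd1, hd2⟩
      have hsubU : (((Finset.Icc (1:ℤ) (c-3)).filter (fun k => k ∈ Btγ)) ∪
          (((Finset.Icc (1:ℤ) (c-3)).filter (fun k => k ∈ beatty α)) ∪
           ((Finset.Icc (1:ℤ) (c-3)).filter (fun k => k ∈ beatty β)))) ⊆
          Finset.Icc (1:ℤ) (c-3) := by
        refine Finset.union_subset (Finset.filter_subset _ _)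
          (Finset.union_subset (Finset.filter_subset _ _) (Finset.filter_subset _ _))
      have hceq : ((Finset.Icc (1:ℤ) (c-3)).filter (fun k => k ∈ Btγ)).card +
          (((Finset.Icc (1:ℤ) (c-3)).filter (fun k => k ∈ beatty α)).card +
           ((Finset.Icc (1:ℤ) (c-3)).filter (fun k => k ∈ beatty β)).card) ≤
          (Finset.Icc (1:ℤ) (c-3)).card := by
        rw [← Finset.card_union_of_disjoint hd3, ← Finset.card_union_of_disjoint hdd]
        exact Finset.card_le_card hsubU
      have hIcc : ((Finset.Icc (1:ℤ) (c-3)).card : ℤ) = c - 3 := by rw [Int.card_Icc]; omega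
      have hCA := beatty_count_ge α ha hα1 hirra hc3
      have hCB := beatty_count_ge β hb hβ1 hirrb hc3
      -- floors lower bound via keyK
      have hk1 : (1:ℤ) ≤ c - 2 := by omega
      have hKK := keyK hirra hirrb ha hb hc hsum hr hs hrs hα2 hβ2 hk1
      have hfl : (c - 3 : ℤ) - ⌊(((c-3:ℤ):ℝ) + 1)*α⌋ - ⌊(((c-3:ℤ):ℝ) + 1)*β⌋ ≤ (n:ℤ) - 1 := by
        have e1 : (((c-3:ℤ):ℝ) + 1) = ((c-2 : ℤ):ℝ) := by push_cast; ring
        have hfa : (⌊((c-2:ℤ):ℝ)*α⌋ : ℝ) = ((c-2:ℤ):ℝ)*α - Int.fract (((c-2:ℤ):ℝ)*α) := by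
          rw [Int.fract]; ring
        have hfb : (⌊((c-2:ℤ):ℝ)*β⌋ : ℝ) = ((c-2:ℤ):ℝ)*β - Int.fract (((c-2:ℤ):ℝ)*β) := by
          rw [Int.fract]; ring
        have hreal : ((c:ℝ) - 3) - (⌊((c-2:ℤ):ℝ)*α⌋ : ℝ) - (⌊((c-2:ℤ):ℝ)*β⌋ : ℝ) < n := by
          rw [hfa, hfb]
          push_cast
          push_cast at hKK
          have h5 : ((c:ℝ)-2)*α + ((c:ℝ)-2)*β = ((c:ℝ)-2) - ((c:ℝ)-2)*γ := by
            linear_combination ((c:ℝ)-2)*hsum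
          have h6 : ((c:ℝ)-2)*γ = (c:ℝ)*γ - 2*γ := by ring
          linarith [hKK, hcγn, h5, h6, hc]
        rw [e1]
        have h4 : (((c - 3 : ℤ) - ⌊((c-2:ℤ):ℝ)*α⌋ - ⌊((c-2:ℤ):ℝ)*β⌋ : ℤ):ℝ) < ((n:ℤ):ℝ) := by
          push_cast
          push_cast at hreal
          linarith
        have h5 : (c - 3 : ℤ) - ⌊((c-2:ℤ):ℝ)*α⌋ - ⌊((c-2:ℤ):ℝ)*β⌋ < (n:ℤ) := by exact_mod_cast h4
        omega
      unfold countLe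
      have hcast : (((Finset.Icc (1:ℤ) (c-3)).filter (fun k => k ∈ Btγ)).card : ℤ) +
          ((((Finset.Icc (1:ℤ) (c-3)).filter (fun k => k ∈ beatty α)).card : ℤ) +
           (((Finset.Icc (1:ℤ) (c-3)).filter (fun k => k ∈ beatty β)).card : ℤ)) ≤
           ((Finset.Icc (1:ℤ) (c-3)).card : ℤ) := by
        exact_mod_cast hceq
      omega
  -- correspondence
  have hctpos : ∀ j : ℕ, 0 < j → 1 ≤ ct j := by
    intro j hj
    have := hmem j hj
    simp only [hBtγ, Set.mem_setOf_eq] at this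
    omega
  have hmono' : ∀ j l : ℕ, 0 < j → j ≤ l → ct j ≤ ct l := by
    intro j l hj hle
    rcases eq_or_lt_of_le hle with rfl | h
    · exact le_rfl
    · exact le_of_lt (hmono j l hj h)
  -- (i) ct n ≤ c
  have hup : ct n ≤ c := by
    by_contra hcon
    push_neg at hcon
    have hle : (countLe Btγ c : ℤ) ≤ (n:ℤ) - 1 := by
      have hinj : ((Finset.Icc (1:ℤ) c).filter (fun k => k ∈ Btγ)).card ≤
          (Finset.Icc 1 (n-1)).card := by
        apply Finset.card_le_card_of_injOn
          (fun x => if h : x ∈ Btγ then Classical.choose (hsurj x h) else 0)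
        · intro x hx
          have hxB : x ∈ Btγ := (Finset.mem_filter.1 hx).2
          have hxc : x ≤ c := (Finset.mem_Icc.1 (Finset.mem_filter.1 hx).1).2
          rw [Finset.mem_coe]; dsimp only
          rw [dif_pos hxB]
          obtain ⟨hk0, hke⟩ := Classical.choose_spec (hsurj x hxB)
          refine Finset.mem_Icc.2 ⟨hk0, ?_⟩
          by_contra hcon2
          push_neg at hcon2
          have hkn : n ≤ Classical.choose (hsurj x hxB) := by omega
          have := hmono' n _ hn hkn
          omega
        · intro x hx y hy hxy
          have hxB : x ∈ Btγ := (Finset.mem_filter.1 (Finset.mem_coe.1 hx)).2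
          have hyB : y ∈ Btγ := (Finset.mem_filter.1 (Finset.mem_coe.1 hy)).2
          dsimp only at hxy
          rw [dif_pos hxB, dif_pos hyB] at hxy
          have hxe := (Classical.choose_spec (hsurj x hxB)).2
          have hye := (Classical.choose_spec (hsurj y hyB)).2
          rw [← hxe, ← hye, hxy]
      have hIccN : (Finset.Icc 1 (n-1)).card = n - 1 := by rw [Nat.card_Icc]; omega
      rw [hIccN] at hinj
      unfold countLe
      have : (((Finset.Icc (1:ℤ) c).filter (fun k => k ∈ Btγ)).card : ℤ) ≤ ((n - 1 : ℕ) : ℤ) := by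
        exact_mod_cast hinj
      have hn' : ((n - 1 : ℕ) : ℤ) = (n:ℤ) - 1 := by omega
      omega
    omega
  -- (ii) c - 3 < ct n
  have hdown : c - 3 < ct n := by
    by_contra hcon
    push_neg at hcon
    have hge : (n:ℤ) ≤ (countLe Btγ (c-3) : ℤ) := by
      have hinj : (Finset.Icc 1 n).card ≤
          ((Finset.Icc (1:ℤ) (c-3)).filter (fun k => k ∈ Btγ)).card := by
        apply Finset.card_le_card_of_injOn ct
        · intro j hj
          obtain ⟨hj1, hjn⟩ := Finset.mem_Icc.1 hj
          refine Finset.mem_filter.2 ⟨Finset.mem_Icc.2 ⟨hctpos j hj1, ?_⟩, hmem j hj1⟩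
          exact le_trans (hmono' j n hj1 hjn) hcon
        · intro j hj l hl hjl
          obtain ⟨hj1, _⟩ := Finset.mem_Icc.1 (Finset.mem_coe.1 hj)
          obtain ⟨hl1, _⟩ := Finset.mem_Icc.1 (Finset.mem_coe.1 hl)
          by_contra hne
          rcases Nat.lt_or_ge j l with h | h
          · exact absurd hjl (ne_of_lt (hmono j l hj1 h))
          · have h2 : l < j := by omega
            exact absurd hjl.symm (ne_of_lt (hmono l j hl1 h2))
      have hIccN : (Finset.Icc 1 n).card = n := by rw [Nat.card_Icc]; omega
      rw [hIccN] at hinj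
      unfold countLe
      exact_mod_cast hinj
    omega
  show c - ct n ∈ ({0, 1, 2} : Set ℤ)
  simp only [Set.mem_insert_iff, Set.mem_singleton_iff]
  omega
end

section
/- Let α, β, γ be positive irrational numbers with α + β + γ = 1 such that α > 1/3 and 1, α, β are linearly independent over ℚ. Then there exist infinitely many positive integers m with m ∈ B_α, m + 1 ∈ B_β ∩ B_γ, and m + 2 ∈ B_α. -/
open scoped Classical

noncomputable def Complex.abs : AbsoluteValue ℂ ℝ :=
  IsAbsoluteValue.toAbsoluteValue (norm : ℂ → ℝ)

lemma Complex.abs_apply' (z : ℂ) : Complex.abs z = ‖z‖ := rfl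

lemma Complex.abs_exp_ofReal_mul_I (x : ℝ) : Complex.abs (Complex.exp (x * Complex.I)) = 1 :=
  Complex.norm_exp_ofReal_mul_I x

lemma Complex.sq_abs (z : ℂ) : Complex.abs z ^ 2 = Complex.normSq z := Complex.sq_norm z

lemma Complex.abs_re_le_abs (z : ℂ) : |z.re| ≤ Complex.abs z := Complex.abs_re_le_norm z

open Finset Complex



noncomputable def ee (x : ℝ) : ℂ := Complex.exp (2 * Real.pi * x * Complex.I)

lemma ee_add (x y : ℝ) : ee (x + y) = ee x * ee y := by
  rw [ee, ee, ee, ← Complex.exp_add]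
  congr 1
  push_cast
  ring

lemma ee_zero : ee 0 = 1 := by simp [ee]

lemma ee_sum {ι : Type*} (s : Finset ι) (f : ι → ℝ) :
    ee (∑ i ∈ s, f i) = ∏ i ∈ s, ee (f i) := by
  classical
  induction s using Finset.induction_on with
  | empty => simp [ee_zero]
  | insert _ _ h ih => rw [Finset.sum_insert h, Finset.prod_insert h, ee_add, ih]

lemma ee_conj (x : ℝ) : (starRingEnd ℂ) (ee x) = ee (-x) := by
  rw [ee, ← Complex.exp_conj]
  congr 1
  simp only [map_mul, Complex.conj_I, Complex.conj_ofReal, map_ofNat]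
  push_cast
  ring

lemma abs_ee (x : ℝ) : Complex.abs (ee x) = 1 := by
  rw [ee]
  have h : (2 * (Real.pi:ℂ) * (x:ℂ)) * I = ((2*Real.pi*x : ℝ) : ℂ) * I := by push_cast; ring
  rw [h, Complex.abs_exp_ofReal_mul_I]

lemma ee_nat_mul (n : ℕ) (x : ℝ) : ee ((n:ℝ) * x) = ee x ^ n := by
  induction n with
  | zero => simp [ee_zero]
  | succ n ih =>
      have : ((n+1 : ℕ) : ℝ) * x = (n:ℝ) * x + x := by push_cast; ring
      rw [this, ee_add, ih, pow_succ]

lemma ee_re (x : ℝ) : (ee x).re = Real.cos (2 * Real.pi * x) := by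
  rw [ee]
  have h : (2 * (Real.pi:ℂ) * (x:ℂ)) * I = ((2*Real.pi*x : ℝ) : ℂ) * I := by push_cast; ring
  rw [h, Complex.exp_ofReal_mul_I_re]

lemma ee_im (x : ℝ) : (ee x).im = Real.sin (2 * Real.pi * x) := by
  rw [ee]
  have h : (2 * (Real.pi:ℂ) * (x:ℂ)) * I = ((2*Real.pi*x : ℝ) : ℂ) * I := by push_cast; ring
  rw [h, Complex.exp_ofReal_mul_I_im]

lemma ee_eq_one_iff {x : ℝ} : ee x = 1 ↔ ∃ m : ℤ, x = m := by
  rw [ee, Complex.exp_eq_one_iff]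
  constructor
  · rintro ⟨n, hn⟩
    refine ⟨n, ?_⟩
    have h1 : ((2 * Real.pi * x : ℝ) : ℂ) * I = (((n:ℝ) * (2 * Real.pi) : ℝ) : ℂ) * I := by
      push_cast
      rw [hn]; ring
    have h2 : (2 * Real.pi * x : ℝ) = (n:ℝ) * (2 * Real.pi) := by
      have := mul_right_cancel₀ Complex.I_ne_zero h1
      exact_mod_cast this
    have hpi : (0:ℝ) < Real.pi := Real.pi_pos
    nlinarith [h2]
  · rintro ⟨m, rfl⟩
    exact ⟨m, by push_cast; ring⟩

lemma normSq_one_add_ee (x : ℝ) :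
    Complex.normSq (1 + ee x) = 2 + 2 * Real.cos (2 * Real.pi * x) := by
  rw [Complex.normSq_apply]
  simp only [Complex.add_re, Complex.add_im, Complex.one_re, Complex.one_im, ee_re, ee_im]
  linear_combination Real.sin_sq_add_cos_sq (2 * Real.pi * x)

lemma geom_bound {z : ℂ} (hz : z ≠ 1) (hz1 : Complex.abs z = 1) (N : ℕ) :
    Complex.abs (∑ n ∈ Finset.range N, z ^ n) ≤ 2 / Complex.abs (z - 1) := by
  rw [geom_sum_eq hz, map_div₀]
  have h1 : Complex.abs (z ^ N - 1) ≤ 2 := by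
    calc Complex.abs (z ^ N - 1) ≤ Complex.abs (z ^ N) + 1 := by
          simpa using Complex.abs.sub_le (z ^ N) 0 1 |>.trans_eq (by simp)
    _ ≤ 2 := by rw [map_pow, hz1]; norm_num
  have h2 : 0 < Complex.abs (z - 1) := by
    rw [AbsoluteValue.pos_iff]; exact sub_ne_zero.mpr hz
  gcongr

lemma mem_beatty_of {α : ℝ} (hα : 0 < α) (m : ℤ) (j : ℤ) (hj : 0 < j)
    (h1 : (m:ℝ) * α < j) (h2 : (j:ℝ) < (m+1) * α) : m ∈ beatty α := by
  refine ⟨j.toNat, by omega, ?_⟩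
  have hjr : ((j.toNat : ℕ) : ℝ) = (j : ℝ) := by
    exact_mod_cast congrArg (Int.cast : ℤ → ℝ) (Int.toNat_of_nonneg hj.le)
  rw [eq_comm, Int.floor_eq_iff]
  constructor
  · rw [hjr, le_div_iff₀ hα]; exact h1.le
  · rw [hjr, div_lt_iff₀ hα]; push_cast; push_cast at h2; linarith


noncomputable def ThetaV {K : ℕ} (v : Fin 3 → ℝ) (f : Fin K → Fin 3) : ℝ := ∑ k, v (f k)

def keyF {K : ℕ} (f : Fin K → Fin 3) : ℕ × ℕ :=
  ((univ.filter fun k => f k = 1).card, (univ.filter fun k => f k = 2).card)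

lemma thetaV_eq {K : ℕ} (u : Fin 3 → ℝ) (hu : u 0 = 0) (f : Fin K → Fin 3) :
    ThetaV u f = ((keyF f).1 : ℝ) * u 1 + ((keyF f).2 : ℝ) * u 2 := by
  rw [ThetaV, ← Finset.sum_fiberwise_of_maps_to (fun x _ => Finset.mem_univ (f x))
    (fun k => u (f k))]
  have h : ∀ j : Fin 3, ∑ k ∈ univ.filter (fun k => f k = j), u (f k)
      = ((univ.filter fun k => f k = j).card : ℝ) * u j := by
    intro j
    rw [Finset.sum_congr rfl (fun k hk => by rw [(Finset.mem_filter.mp hk).2]),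
      Finset.sum_const, nsmul_eq_mul]
  rw [Fin.sum_univ_three, h 0, h 1, h 2, hu, keyF]
  ring

lemma diag_eq {K : ℕ} (u : Fin 3 → ℝ) (hu : u 0 = 0) {f g : Fin K → Fin 3}
    (h : keyF f = keyF g) : ThetaV u f = ThetaV u g := by
  rw [thetaV_eq u hu f, thetaV_eq u hu g, h]

lemma expansion (K N N₀ : ℕ) (v w : Fin 3 → ℝ) :
    ((∑ n ∈ range N,
        (Complex.normSq (∑ j : Fin 3, ee (w j + ((N₀ + n : ℕ):ℝ) * v j)))^K : ℝ) : ℂ)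
      = ∑ p ∈ (univ : Finset ((Fin K → Fin 3) × (Fin K → Fin 3))),
          ee (ThetaV w p.1 - ThetaV w p.2) * (ee ((N₀:ℝ) * (ThetaV v p.1 - ThetaV v p.2)) *
            ∑ n ∈ range N, ee (ThetaV v p.1 - ThetaV v p.2) ^ n) := by
  have hT : ∀ m : ℕ, (∑ j : Fin 3, ee (w j + (m:ℝ) * v j)) ^ K
      = ∑ f : Fin K → Fin 3, ee (ThetaV w f + (m:ℝ) * ThetaV v f) := by
    intro m
    rw [Fintype.sum_pow]
    apply Finset.sum_congr rfl
    intro f _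
    rw [← ee_sum]
    congr 1
    rw [ThetaV, ThetaV, Finset.mul_sum, ← Finset.sum_add_distrib]
  have hstep : ∀ m : ℕ, ((Complex.normSq (∑ j : Fin 3, ee (w j + (m:ℝ) * v j)) : ℝ) : ℂ)^K
      = ∑ p ∈ (univ : Finset ((Fin K → Fin 3) × (Fin K → Fin 3))),
          ee (ThetaV w p.1 - ThetaV w p.2) * ee ((m:ℝ) * (ThetaV v p.1 - ThetaV v p.2)) := by
    intro m
    set T := ∑ j : Fin 3, ee (w j + (m:ℝ) * v j) with hTdef
    have h1 : ((Complex.normSq T : ℝ) : ℂ) = T * (starRingEnd ℂ) T :=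
      (Complex.mul_conj T).symm
    have h2 : ((Complex.normSq T : ℝ) : ℂ)^K = T^K * (starRingEnd ℂ) (T^K) := by
      rw [h1, map_pow]; ring
    rw [h2, hT m, map_sum]
    have h3 : ∀ g : Fin K → Fin 3, (starRingEnd ℂ) (ee (ThetaV w g + (m:ℝ) * ThetaV v g))
        = ee (-(ThetaV w g + (m:ℝ) * ThetaV v g)) := fun g => ee_conj _
    rw [Finset.sum_congr rfl (fun g _ => h3 g), Finset.sum_mul_sum]
    rw [← Finset.sum_product']
    apply Finset.sum_congr rfl
    intro p _
    rw [← ee_add, ← ee_add]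
    congr 1
    ring
  calc ((∑ n ∈ range N,
        (Complex.normSq (∑ j : Fin 3, ee (w j + ((N₀ + n : ℕ):ℝ) * v j)))^K : ℝ) : ℂ)
      = ∑ n ∈ range N, ((Complex.normSq (∑ j : Fin 3, ee (w j + ((N₀ + n : ℕ):ℝ) * v j)) : ℝ) : ℂ)^K := by
        norm_cast
    _ = ∑ n ∈ range N, ∑ p ∈ (univ : Finset ((Fin K → Fin 3) × (Fin K → Fin 3))),
          ee (ThetaV w p.1 - ThetaV w p.2) * ee (((N₀ + n : ℕ):ℝ) * (ThetaV v p.1 - ThetaV v p.2)) := by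
        exact Finset.sum_congr rfl fun n _ => hstep (N₀ + n)
    _ = ∑ p ∈ (univ : Finset ((Fin K → Fin 3) × (Fin K → Fin 3))), ∑ n ∈ range N,
          ee (ThetaV w p.1 - ThetaV w p.2) * ee (((N₀ + n : ℕ):ℝ) * (ThetaV v p.1 - ThetaV v p.2)) :=
        Finset.sum_comm
    _ = _ := by
        apply Finset.sum_congr rfl
        intro p _
        rw [Finset.mul_sum, Finset.mul_sum]
        apply Finset.sum_congr rfl
        intro n _
        have : ((N₀ + n : ℕ):ℝ) * (ThetaV v p.1 - ThetaV v p.2)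
            = (N₀:ℝ) * (ThetaV v p.1 - ThetaV v p.2) + (n:ℝ) * (ThetaV v p.1 - ThetaV v p.2) := by
          push_cast; ring
        rw [this, ee_add, ee_nat_mul n (ThetaV v p.1 - ThetaV v p.2)]

lemma close_to_int {u δ : ℝ} (hδpos : 0 < δ) (hδ4 : δ ≤ 1/4)
    (h : Real.cos (2*Real.pi*δ) < Real.cos (2*Real.pi*u)) : ∃ p : ℤ, |u - p| < δ := by
  have hpi := Real.pi_pos
  refine ⟨round u, ?_⟩
  set u' := u - (round u : ℤ) with hu'
  have h12 : |u'| ≤ 1/2 := abs_sub_round u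
  have hcos1 : Real.cos (2*Real.pi*u) = Real.cos (2*Real.pi*|u'|) := by
    have e1 : 2*Real.pi*u = 2*Real.pi*u' + (round u : ℤ) * (2*Real.pi) := by
      rw [hu']; push_cast; ring
    rw [e1, Real.cos_add_int_mul_two_pi]
    rw [show 2*Real.pi*|u'| = |2*Real.pi*u'| by
      rw [abs_mul, abs_of_pos Real.two_pi_pos]]
    rw [Real.cos_abs]
  rw [hcos1] at h
  have hm1 : 2*Real.pi*δ ∈ Set.Icc 0 Real.pi := by
    constructor
    · positivity
    · nlinarith
  have hm2 : 2*Real.pi*|u'| ∈ Set.Icc 0 Real.pi := by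
    constructor
    · positivity
    · nlinarith [abs_nonneg u']
  have := (Real.strictAntiOn_cos.lt_iff_gt hm1 hm2).mp h
  have : |u'| < δ := by nlinarith
  exact this

lemma count_lower (K : ℕ) :
    (9:ℝ)^K ≤ (((univ : Finset ((Fin K → Fin 3) × (Fin K → Fin 3))).filter
        fun p => keyF p.1 = keyF p.2).card : ℝ) * ((K:ℝ)+1)^2 := by
  classical
  set keys : Finset (ℕ × ℕ) := (range (K+1)) ×ˢ (range (K+1)) with hkeys
  have hmapsto : ∀ f : Fin K → Fin 3, keyF f ∈ keys := by
    intro f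
    have h1 : (univ.filter fun k => f k = 1).card ≤ K := by
      simpa using (Finset.card_filter_le univ fun k => f k = 1)
    have h2 : (univ.filter fun k => f k = 2).card ≤ K := by
      simpa using (Finset.card_filter_le univ fun k => f k = 2)
    simp only [hkeys, Finset.mem_product, Finset.mem_range, Nat.lt_succ_iff, keyF]
    exact ⟨h1, h2⟩
  set M : ℕ × ℕ → ℕ := fun c => (univ.filter fun f : Fin K → Fin 3 => keyF f = c).card with hM
  have h1 : ∑ c ∈ keys, M c = 3 ^ K := by
    rw [← Finset.card_eq_sum_card_fiberwise (fun f (_ : f ∈ univ) => hmapsto f)]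
    rw [Finset.card_univ]
    simp
  have h2 : (((univ : Finset ((Fin K → Fin 3) × (Fin K → Fin 3))).filter
      fun p => keyF p.1 = keyF p.2).card : ℕ) = ∑ c ∈ keys, M c * M c := by
    rw [Finset.card_eq_sum_card_fiberwise
      (f := fun p : (Fin K → Fin 3) × (Fin K → Fin 3) => keyF p.1)
      (t := keys) (fun p _ => hmapsto p.1)]
    apply Finset.sum_congr rfl
    intro c _
    rw [Finset.filter_filter]
    have hset : ((univ : Finset ((Fin K → Fin 3) × (Fin K → Fin 3))).filter
        fun p => keyF p.1 = keyF p.2 ∧ keyF p.1 = c)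
        = (univ.filter fun f => keyF f = c) ×ˢ (univ.filter fun g => keyF g = c) := by
      ext p
      simp only [Finset.mem_filter, Finset.mem_univ, true_and, Finset.mem_product]
      constructor
      · rintro ⟨hpq, hpc⟩
        exact ⟨hpc, by rw [← hpq]; exact hpc⟩
      · rintro ⟨hp1, hp2⟩
        exact ⟨hp1.trans hp2.symm, hp1⟩
    rw [hset, Finset.card_product]
  have hCS := Finset.sum_mul_sq_le_sq_mul_sq keys (fun c => (M c : ℝ)) (fun _ => 1)
  have hsum1 : ∑ _c ∈ keys, (1:ℝ)^2 = ((K:ℝ)+1)^2 := by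
    rw [Finset.sum_const, hkeys, Finset.card_product, Finset.card_range]
    push_cast
    ring
  calc (9:ℝ)^K = ((3:ℝ)^K)^2 := by
        rw [← pow_mul, mul_comm, pow_mul]; norm_num
    _ = (∑ c ∈ keys, (M c:ℝ) * 1)^2 := by
        simp only [mul_one]
        norm_cast
        rw [h1]
    _ ≤ (∑ c ∈ keys, (M c:ℝ)^2) * ∑ _c ∈ keys, (1:ℝ)^2 := hCS
    _ = _ := by
        rw [hsum1]
        congr 1
        rw [h2]
        push_cast
        apply Finset.sum_congr rfl
        intro c _
        ring

theorem kronecker2 (α β a b : ℝ)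
    (hind : ∀ x y z : ℤ, (x:ℝ) * α + (y:ℝ) * β + (z:ℝ) = 0 → x = 0 ∧ y = 0)
    {ε : ℝ} (hε : 0 < ε) (N₀ : ℕ) :
    ∃ n : ℕ, N₀ ≤ n ∧ ∃ p q : ℤ, |(n:ℝ) * α - a - p| < ε ∧ |(n:ℝ) * β - b - q| < ε := by
  classical
  have hpi := Real.pi_pos
  set δ := min ε (1/4) with hδdef
  have hδpos : 0 < δ := lt_min hε (by norm_num)
  have hδε : δ ≤ ε := min_le_left _ _
  have hδ4 : δ ≤ 1/4 := min_le_right _ _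
  suffices h : ∃ n : ℕ, N₀ ≤ n ∧ ∃ p q : ℤ, |(n:ℝ)*α - a - p| < δ ∧ |(n:ℝ)*β - b - q| < δ by
    obtain ⟨n, hn, p, q, h1, h2⟩ := h
    exact ⟨n, hn, p, q, h1.trans_le hδε, h2.trans_le hδε⟩
  -- the parameter η
  have hcosδ : Real.cos (2*Real.pi*δ) < 1 := by
    have h0 : (0:ℝ) ∈ Set.Icc 0 Real.pi := Set.mem_Icc.mpr ⟨le_rfl, hpi.le⟩
    have h1 : 2*Real.pi*δ ∈ Set.Icc 0 Real.pi := Set.mem_Icc.mpr ⟨by positivity, by nlinarith⟩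
    have := Real.strictAntiOn_cos h0 h1 (by positivity)
    simpa using this
  set η : ℝ := (1 - Real.cos (2*Real.pi*δ))/2 with hηdef
  have hη0 : 0 < η := by simp only [hηdef]; linarith
  have hη1 : η ≤ 1 := by
    have := Real.neg_one_le_cos (2*Real.pi*δ)
    simp only [hηdef]; linarith
  have hcosη : Real.cos (2*Real.pi*δ) = 1 - 2*η := by simp only [hηdef]; ring
  -- pick K
  set r : ℝ := ((3-η)/3)^2 with hrdef
  have h3η : 2 ≤ 3 - η := by linarith
  have hr0 : 0 < r := by positivity
  have hr1 : r < 1 := by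
    apply pow_lt_one₀ (by positivity)
    · linarith
    · norm_num
  obtain ⟨m, hmr, hm1⟩ :
      ∃ m : ℕ, ‖((m:ℝ)^2 * r^m)‖ < r ∧ 1 ≤ m := by
    have hs : Summable (fun n : ℕ => ‖((n:ℝ)^2 * r^n)‖) := by
      have : ‖r‖ < 1 := by rw [Real.norm_eq_abs, abs_of_pos hr0]; exact hr1
      exact summable_norm_pow_mul_geometric_of_norm_lt_one 2 this
    have ht := hs.tendsto_atTop_zero
    have := (ht.eventually_lt_const hr0).and (Filter.eventually_ge_atTop 1)
    obtain ⟨m, h1, h2⟩ := this.exists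
    exact ⟨m, h1, h2⟩
  set K : ℕ := m - 1 with hKdef
  have hmK : m = K + 1 := by omega
  have hKr : ((K:ℝ)+1)^2 * r^K < 1 := by
    have h1 : ((K:ℝ)+1)^2 * r^(K+1) < r := by
      rw [Real.norm_eq_abs, _root_.abs_of_nonneg (by positivity)] at hmr
      rw [hmK] at hmr
      push_cast at hmr ⊢
      linarith
    have h2 : (((K:ℝ)+1)^2 * r^K) * r < 1 * r := by
      rw [one_mul]
      calc (((K:ℝ)+1)^2 * r^K) * r = ((K:ℝ)+1)^2 * r^(K+1) := by ring
      _ < r := h1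
    exact lt_of_mul_lt_mul_right h2 hr0.le
  -- setup
  set v : Fin 3 → ℝ := ![0, α, β] with hvdef
  set wv : Fin 3 → ℝ := ![0, -a, -b] with hwdef
  have hv0 : v 0 = 0 := rfl
  have hw0 : wv 0 = 0 := rfl
  have hv1 : v 1 = α := rfl
  have hv2 : v 2 = β := rfl
  -- off-diagonal characters are nontrivial
  have hne : ∀ f g : Fin K → Fin 3, keyF f ≠ keyF g → ee (ThetaV v f - ThetaV v g) ≠ 1 := by
    intro f g hfg h1
    obtain ⟨mm, hmm⟩ := ee_eq_one_iff.mp h1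
    rw [thetaV_eq v hv0 f, thetaV_eq v hv0 g, hv1, hv2] at hmm
    have hz := hind (((keyF f).1 : ℤ) - ((keyF g).1 : ℤ))
      (((keyF f).2 : ℤ) - ((keyF g).2 : ℤ)) (-mm) (by push_cast; linarith)
    apply hfg
    have e1 : (keyF f).1 = (keyF g).1 := by omega
    have e2 : (keyF f).2 = (keyF g).2 := by omega
    exact Prod.ext e1 e2
  -- the diag count
  set D : ℕ := (((univ : Finset ((Fin K → Fin 3) × (Fin K → Fin 3))).filter
      fun p => keyF p.1 = keyF p.2).card) with hDdef
  have hDlow : (9:ℝ)^K ≤ (D:ℝ) * ((K:ℝ)+1)^2 := count_lower K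
  set X : ℝ := ((3-η)^2)^K with hXdef
  have hXD : X < (D:ℝ) := by
    have h9r : (9:ℝ) * r = (3-η)^2 := by
      rw [hrdef, div_pow]; ring
    have hXeq : X * ((K:ℝ)+1)^2 = (9:ℝ)^K * (((K:ℝ)+1)^2 * r^K) := by
      rw [hXdef, ← h9r, mul_pow]
      ring
    have h1 : X * ((K:ℝ)+1)^2 < (9:ℝ)^K * 1 := by
      rw [hXeq]
      apply mul_lt_mul_of_pos_left hKr (by positivity)
    have h2 : X * ((K:ℝ)+1)^2 < (D:ℝ) * ((K:ℝ)+1)^2 := by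
      calc X * ((K:ℝ)+1)^2 < (9:ℝ)^K * 1 := h1
      _ = (9:ℝ)^K := mul_one _
      _ ≤ (D:ℝ) * ((K:ℝ)+1)^2 := hDlow
    exact lt_of_mul_lt_mul_right h2 (by positivity)
  have hX0 : 0 ≤ X := by positivity
  -- the off-diagonal constant
  set B : ℝ := ∑ p ∈ ((univ : Finset ((Fin K → Fin 3) × (Fin K → Fin 3))).filter
      fun p => ¬ keyF p.1 = keyF p.2),
      2 / Complex.abs (ee (ThetaV v p.1 - ThetaV v p.2) - 1) with hBdef
  have hB0 : 0 ≤ B := by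
    apply Finset.sum_nonneg
    intro p _
    positivity
  -- pick N
  obtain ⟨N, hN⟩ := exists_nat_gt (max (B / ((D:ℝ) - X)) 0)
  have hN0 : 0 < N := by
    have h0 : (0:ℝ) ≤ max (B / ((D:ℝ) - X)) 0 := le_max_right _ _
    have hNpos : (0:ℝ) < (N:ℝ) := lt_of_le_of_lt h0 hN
    exact_mod_cast hNpos
  have hNB : B < (N:ℝ) * ((D:ℝ) - X) := by
    have h1 : B / ((D:ℝ) - X) < (N:ℝ) := lt_of_le_of_lt (le_max_left _ _) hN
    have h2 : 0 < (D:ℝ) - X := by linarith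
    calc B = (B / ((D:ℝ) - X)) * ((D:ℝ) - X) := by field_simp
    _ < (N:ℝ) * ((D:ℝ) - X) := by
        apply mul_lt_mul_of_pos_right h1 h2
  -- the T function
  set T : ℕ → ℂ := fun mm => ∑ j : Fin 3, ee (wv j + (mm:ℝ) * v j) with hTdef
  -- main estimate
  set S : ℝ := ∑ n ∈ range N, (Complex.normSq (T (N₀ + n)))^K with hSdef
  have hSC : (S : ℂ) = ∑ p ∈ (univ : Finset ((Fin K → Fin 3) × (Fin K → Fin 3))),
      ee (ThetaV wv p.1 - ThetaV wv p.2) * (ee ((N₀:ℝ) * (ThetaV v p.1 - ThetaV v p.2)) *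
        ∑ n ∈ range N, ee (ThetaV v p.1 - ThetaV v p.2) ^ n) := by
    rw [hSdef]
    exact expansion K N N₀ v wv
  -- split into diagonal and off-diagonal
  have hsplit := Finset.sum_filter_add_sum_filter_not
    (univ : Finset ((Fin K → Fin 3) × (Fin K → Fin 3)))
    (fun p => keyF p.1 = keyF p.2)
    (fun p => ee (ThetaV wv p.1 - ThetaV wv p.2) * (ee ((N₀:ℝ) * (ThetaV v p.1 - ThetaV v p.2)) *
        ∑ n ∈ range N, ee (ThetaV v p.1 - ThetaV v p.2) ^ n))
  have hdiag : ∑ p ∈ ((univ : Finset ((Fin K → Fin 3) × (Fin K → Fin 3))).filter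
      fun p => keyF p.1 = keyF p.2),
      ee (ThetaV wv p.1 - ThetaV wv p.2) * (ee ((N₀:ℝ) * (ThetaV v p.1 - ThetaV v p.2)) *
        ∑ n ∈ range N, ee (ThetaV v p.1 - ThetaV v p.2) ^ n) = (D:ℂ) * N := by
    have hterm : ∀ p ∈ ((univ : Finset ((Fin K → Fin 3) × (Fin K → Fin 3))).filter
        fun p => keyF p.1 = keyF p.2),
        ee (ThetaV wv p.1 - ThetaV wv p.2) * (ee ((N₀:ℝ) * (ThetaV v p.1 - ThetaV v p.2)) *
          ∑ n ∈ range N, ee (ThetaV v p.1 - ThetaV v p.2) ^ n) = (N:ℂ) := by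
      intro p hp
      have hkey : keyF p.1 = keyF p.2 := (Finset.mem_filter.mp hp).2
      rw [diag_eq v hv0 hkey, diag_eq wv hw0 hkey, sub_self, sub_self, mul_zero, ee_zero]
      simp
    rw [Finset.sum_congr rfl hterm, Finset.sum_const, hDdef]
    simp [nsmul_eq_mul]
  set off : ℂ := ∑ p ∈ ((univ : Finset ((Fin K → Fin 3) × (Fin K → Fin 3))).filter
      fun p => ¬ keyF p.1 = keyF p.2),
      ee (ThetaV wv p.1 - ThetaV wv p.2) * (ee ((N₀:ℝ) * (ThetaV v p.1 - ThetaV v p.2)) *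
        ∑ n ∈ range N, ee (ThetaV v p.1 - ThetaV v p.2) ^ n) with hoffdef
  have hoff : Complex.abs off ≤ B := by
    rw [hoffdef]
    refine (Complex.abs.sum_le _ _).trans ?_
    rw [hBdef]
    apply Finset.sum_le_sum
    intro p hp
    have hpne : keyF p.1 ≠ keyF p.2 := (Finset.mem_filter.mp hp).2
    have hne1 : ee (ThetaV v p.1 - ThetaV v p.2) ≠ 1 := hne p.1 p.2 hpne
    rw [map_mul, map_mul, abs_ee, abs_ee, one_mul, one_mul]
    exact geom_bound hne1 (abs_ee _) N
  have hSre : (S:ℂ) = (D:ℂ) * N + off := by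
    rw [hSC, ← hsplit, hdiag, hoffdef]
  have hSlow : (D:ℝ) * N - B ≤ S := by
    have h2 := congrArg Complex.re hSre
    have h3 : ((D:ℂ) * N + off).re = (D:ℝ)*(N:ℝ) + off.re := by
      simp [Complex.add_re, Complex.mul_re]
    rw [Complex.ofReal_re, h3] at h2
    have h4 : |off.re| ≤ Complex.abs off := Complex.abs_re_le_abs _
    have h5 : -B ≤ off.re := by
      have := neg_abs_le off.re
      linarith
    linarith
  clear_value T S off
  clear hoff hSre hdiag hsplit hSC hoffdef hne hind hcosδ hmr hm1 hKr hDlow hXD hB0 hN hN0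
  have hexist : ∃ n ∈ range N, ((3-η)^2) < Complex.normSq (T (N₀ + n)) := by
    by_contra hcon
    push_neg at hcon
    have hle : ∀ n ∈ range N, (Complex.normSq (T (N₀+n)))^K ≤ X := by
      intro n hn
      rw [hXdef]
      exact pow_le_pow_left₀ (Complex.normSq_nonneg _) (hcon n hn) K
    have hSup : S ≤ (N:ℝ) * X := by
      rw [hSdef]
      calc ∑ n ∈ range N, (Complex.normSq (T (N₀+n)))^K ≤ ∑ _n ∈ range N, X :=
            Finset.sum_le_sum hle
      _ = (N:ℝ) * X := by rw [Finset.sum_const, card_range, nsmul_eq_mul]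
    rw [mul_sub] at hNB
    linarith
  obtain ⟨n, hnN, hn2⟩ := hexist
  clear hSlow hNB hSdef hBdef hXdef hX0 hrdef hr0 hr1
  set nn := N₀ + n with hnn
  have hTn : T nn = 1 + ee ((nn:ℝ)*α - a) + ee ((nn:ℝ)*β - b) := by
    rw [hTdef]
    show (∑ j : Fin 3, ee (wv j + (nn:ℝ) * v j)) = _
    rw [Fin.sum_univ_three]
    have e0 : wv 0 + (nn:ℝ) * v 0 = 0 := by rw [hv0, hw0]; ring
    have e1 : wv 1 + (nn:ℝ) * v 1 = (nn:ℝ)*α - a := by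
      show -a + (nn:ℝ) * α = _
      ring
    have e2 : wv 2 + (nn:ℝ) * v 2 = (nn:ℝ)*β - b := by
      show -b + (nn:ℝ) * β = _
      ring
    rw [e0, e1, e2, ee_zero]
  have habsT : 3 - η < Complex.abs (T nn) := by
    by_contra hcon
    push_neg at hcon
    have h1 : Complex.normSq (T nn) ≤ (3-η)^2 := by
      rw [← Complex.sq_abs]
      exact pow_le_pow_left₀ (Complex.abs.nonneg _) hcon 2
    linarith
  have hRe : ∀ u1 u2 : ℝ, T nn = 1 + ee u1 + ee u2 →
      Real.cos (2*Real.pi*δ) < Real.cos (2*Real.pi*u1) := by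
    intro u1 u2 hT
    have h1 : Complex.abs (T nn) ≤ Complex.abs (1 + ee u1) + 1 := by
      rw [hT]
      calc Complex.abs (1 + ee u1 + ee u2)
          ≤ Complex.abs (1 + ee u1) + Complex.abs (ee u2) := Complex.abs.add_le _ _
      _ = Complex.abs (1 + ee u1) + 1 := by rw [abs_ee]
    have h2 : 2 - η < Complex.abs (1 + ee u1) := by linarith
    have h3 : (2-η)^2 < Complex.normSq (1 + ee u1) := by
      rw [← Complex.sq_abs]
      have h2η : (0:ℝ) ≤ 2 - η := by linarith
      nlinarith
    rw [normSq_one_add_ee] at h3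
    rw [hcosη]
    nlinarith
  have hc1 := hRe _ _ hTn
  have hc2 := hRe ((nn:ℝ)*β - b) ((nn:ℝ)*α - a) (by rw [hTn]; ring)
  obtain ⟨p, hp⟩ := close_to_int hδpos hδ4 hc1
  obtain ⟨q, hq⟩ := close_to_int hδpos hδ4 hc2
  exact ⟨nn, Nat.le_add_right _ _, p, q, hp, hq⟩

set_option maxHeartbeats 1600000 in
theorem infinitely_many_patterns (α β γ : ℝ)
    (hirra : Irrational α) (hirrb : Irrational β) (hirrc : Irrational γ)
    (ha : 0 < α) (hb : 0 < β) (hc : 0 < γ) (hsum : α + β + γ = 1)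
    (halpha : 1 / 3 < α)
    (hli : LinearIndependent ℚ ![(1 : ℝ), α, β]) :
    ∀ N : ℤ, ∃ m : ℤ, N < m ∧ 0 < m ∧
      m ∈ beatty α ∧ (m + 1) ∈ beatty β ∧ (m + 1) ∈ beatty γ ∧ (m + 2) ∈ beatty α := by
  intro N
  have hα1 : α < 1 := by linarith
  have hind : ∀ x y z : ℤ, (x:ℝ) * α + (y:ℝ) * β + (z:ℝ) = 0 → x = 0 ∧ y = 0 := by
    intro x y z hxyz
    have h := Fintype.linearIndependent_iff.mp hli ![(z:ℚ), (x:ℚ), (y:ℚ)] ?_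
    · constructor
      · have h1 := h 1
        simp only [Matrix.cons_val_one, Matrix.head_cons, Matrix.cons_val_zero] at h1
        exact_mod_cast h1
      · have h2 := h 2
        simp only [Matrix.cons_val_two, Matrix.tail_cons, Matrix.head_cons] at h2
        exact_mod_cast h2
    · rw [Fin.sum_univ_three]
      simp only [Matrix.cons_val_zero, Matrix.cons_val_one, Matrix.head_cons,
        Matrix.cons_val_two, Matrix.tail_cons]
      rw [Rat.smul_def, Rat.smul_def, Rat.smul_def]
      push_cast
      linarith
  -- target values
  set lo1 : ℝ := max 0 (1 - 2*α) with hlo1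
  set hi1 : ℝ := min α (1 - α) with hhi1
  have hlh1 : lo1 < hi1 := max_lt (lt_min ha (by linarith)) (lt_min (by linarith) (by linarith))
  set a0 : ℝ := (lo1 + hi1)/2 with ha0
  have ha0l : lo1 < a0 := by rw [ha0]; linarith
  have ha0h : a0 < hi1 := by rw [ha0]; linarith
  have hlo1_0 : (0:ℝ) ≤ lo1 := le_max_left _ _
  have hlo1_2 : 1 - 2*α ≤ lo1 := le_max_right _ _
  have hhi1_a : hi1 ≤ α := min_le_left _ _
  have hhi1_b : hi1 ≤ 1 - α := min_le_right _ _
  set lo2 : ℝ := max (1 - β) (1 - a0) with hlo2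
  set hi2 : ℝ := min 1 (1 + γ - a0) with hhi2
  have hlh2 : lo2 < hi2 := by
    apply max_lt
    · apply lt_min
      · linarith
      · linarith
    · apply lt_min
      · linarith
      · linarith
  set b0 : ℝ := (lo2 + hi2)/2 with hb0
  have hb0l : lo2 < b0 := by rw [hb0]; linarith
  have hb0h : b0 < hi2 := by rw [hb0]; linarith
  have hlo2_b : 1 - β ≤ lo2 := le_max_left _ _
  have hlo2_a : 1 - a0 ≤ lo2 := le_max_right _ _
  have hhi2_1 : hi2 ≤ 1 := min_le_left _ _
  have hhi2_g : hi2 ≤ 1 + γ - a0 := min_le_right _ _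
  have hab1 : 1 < a0 + b0 := by linarith
  have hab2 : a0 + b0 < 1 + γ := by linarith
  set ε : ℝ := min (min (a0 - lo1) (hi1 - a0))
      (min (min (b0 - lo2) (hi2 - b0)) (min ((a0 + b0 - 1)/2) ((1 + γ - a0 - b0)/2)))
      with hεdef
  have hε : 0 < ε := by
    refine lt_min (lt_min (by linarith) (by linarith))
      (lt_min (lt_min (by linarith) (by linarith)) (lt_min (by linarith) (by linarith)))
  have hε1 : ε ≤ a0 - lo1 := le_trans (min_le_left _ _) (min_le_left _ _)
  have hε2 : ε ≤ hi1 - a0 := le_trans (min_le_left _ _) (min_le_right _ _)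
  have hε3 : ε ≤ b0 - lo2 :=
    le_trans (min_le_right _ _) (le_trans (min_le_left _ _) (min_le_left _ _))
  have hε4 : ε ≤ hi2 - b0 :=
    le_trans (min_le_right _ _) (le_trans (min_le_left _ _) (min_le_right _ _))
  have hε5 : ε ≤ (a0 + b0 - 1)/2 :=
    le_trans (min_le_right _ _) (le_trans (min_le_right _ _) (min_le_left _ _))
  have hε6 : ε ≤ (1 + γ - a0 - b0)/2 :=
    le_trans (min_le_right _ _) (le_trans (min_le_right _ _) (min_le_right _ _))
  clear_value lo1 hi1 a0 lo2 hi2 b0 ε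
  clear hεdef hlo1 hhi1 ha0 hlo2 hhi2 hb0
  -- apply Kronecker
  obtain ⟨n, hn, p, q, hp, hq⟩ := kronecker2 α β a0 b0 hind hε (N.toNat + 2)
  rw [abs_lt] at hp hq
  obtain ⟨hp1, hp2⟩ := hp
  obtain ⟨hq1, hq2⟩ := hq
  -- bounds on fractional-type quantities
  have hA1 : lo1 < (n:ℝ)*α - p := by linarith
  have hA2 : (n:ℝ)*α - p < hi1 := by linarith
  have hB1 : lo2 < (n:ℝ)*β - q := by linarith
  have hB2 : (n:ℝ)*β - q < hi2 := by linarith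
  have hS1 : 1 < ((n:ℝ)*α - p) + ((n:ℝ)*β - q) := by linarith
  have hS2 : ((n:ℝ)*α - p) + ((n:ℝ)*β - q) < 1 + γ := by linarith
  have hn2 : 2 ≤ n := by omega
  have hnr : (2:ℝ) ≤ (n:ℝ) := by exact_mod_cast hn2
  set m : ℤ := (n:ℤ) - 1 with hm
  have hmr : (m:ℝ) = (n:ℝ) - 1 := by rw [hm]; push_cast; ring
  clear_value m
  have hNm : N < m := by
    have h1 : N ≤ (N.toNat : ℤ) := Int.self_le_toNat N
    have h2 : (N.toNat + 2 : ℕ) ≤ n := hn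
    omega
  have hm0 : 0 < m := by omega
  refine ⟨m, hNm, hm0, ?_, ?_, ?_, ?_⟩
  · -- m ∈ beatty α with witness p
    have hppos : (0:ℝ) < p := by
      nlinarith [mul_le_mul_of_nonneg_right (by linarith : (1:ℝ) ≤ (n:ℝ)-1) ha.le]
    refine mem_beatty_of ha m p (by exact_mod_cast hppos) ?_ ?_
    · rw [hmr]; linarith
    · rw [hmr]; push_cast; linarith
  · -- m+1 = n ∈ beatty β with witness q+1
    have hnβ : (0:ℝ) < (n:ℝ)*β := mul_pos (by linarith) hb
    have hqpos : (0:ℝ) < (q:ℝ)+1 := by linarith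
    refine mem_beatty_of hb (m+1) (q+1) (by exact_mod_cast hqpos) ?_ ?_
    · push_cast [hmr]; linarith
    · push_cast [hmr]; linarith
  · -- m+1 = n ∈ beatty γ with witness n - p - q - 1
    have hγeq : γ = 1 - α - β := by linarith
    have hngamma : (n:ℝ)*γ = (n:ℝ) - (n:ℝ)*α - (n:ℝ)*β := by rw [hγeq]; ring
    have hnγ : (0:ℝ) < (n:ℝ)*γ := mul_pos (by linarith) hc
    have hjpos : (0:ℝ) < (n:ℝ) - (p:ℝ) - (q:ℝ) - 1 := by linarith
    refine mem_beatty_of hc (m+1) ((n:ℤ) - p - q - 1) ?_ ?_ ?_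
    · have h0 : (0:ℝ) < (((n:ℤ) - p - q - 1 : ℤ) : ℝ) := by push_cast; linarith
      exact_mod_cast h0
    · push_cast [hmr]; linarith
    · push_cast [hmr]; linarith
  · -- m+2 = n+1 ∈ beatty α with witness p+1
    have hppos : (0:ℝ) < (p:ℝ)+1 := by
      nlinarith [mul_le_mul_of_nonneg_right (by linarith : (1:ℝ) ≤ (n:ℝ)-1) ha.le]
    refine mem_beatty_of ha (m+2) (p+1) (by exact_mod_cast hppos) ?_ ?_
    · push_cast [hmr]; linarith
    · push_cast [hmr]; linarith
end
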